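/- Let G be a simple graph on a finite vertex set V with |V| = n, represented by a pair of bijections σ₁, σ₂ : V → {0,1,…,n−1} in the sense that distinct vertices u, w are adjacent in G iff (σ₁(u) < σ₁(w)) ↔ (σ₂(w) < σ₂(u)). Fix a vertex v and, for i ∈ {1,2}, define σᵢ' : V → {0,1,…,n−1} by: σᵢ'(x) = σᵢ(x) − σᵢ(v) − 1 if σᵢ(x) > σᵢ(v); σᵢ'(v) = n − 1 − σᵢ(v); and σᵢ'(x) = σᵢ(x) + n − σᵢ(v) if σᵢ(x) < σᵢ(v). Then σ₁' and σ₂' are bijections from V onto {0,1,…,n−1}, and the pair (σ₁', σ₂') represents the Seidel complement G*v: distinct vertices u, w are adjacent in G*v iff (σ₁'(u) < σ₁'(w)) ↔ (σ₂'(w) < σ₂'(u)). -/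

import Mathlib

universe u

/-- The Seidel complement of `G` at `v`: adjacency between the open neighborhood of `v`
and the set of vertices different from `v` and not adjacent to `v` is complemented,
all other adjacencies are unchanged. -/
def seidelCompl {V : Type u} (G : SimpleGraph V) (v : V) : SimpleGraph V where
  Adj x y := x ≠ y ∧
    Xor' (G.Adj x y)
      ((G.Adj v x ∧ ¬ G.Adj v y ∧ y ≠ v) ∨ (G.Adj v y ∧ ¬ G.Adj v x ∧ x ≠ v))
  symm := ⟨by
    rintro x y ⟨hxy, h⟩
    refine ⟨hxy.symm, ?_⟩
    have h1 : G.Adj x y ↔ G.Adj y x := G.adj_comm x y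
    unfold Xor' at h ⊢
    rw [← h1, or_comm]
    exact h⟩
  loopless := ⟨fun x h => h.1 rfl⟩

lemma seidelCompl_adj {V : Type u} (G : SimpleGraph V) (v x y : V) :
    (seidelCompl G v).Adj x y ↔ x ≠ y ∧
    Xor' (G.Adj x y)
      ((G.Adj v x ∧ ¬ G.Adj v y ∧ y ≠ v) ∨ (G.Adj v y ∧ ¬ G.Adj v x ∧ x ≠ v)) := Iff.rfl

lemma cutBij {V : Type u} (n : ℕ) (σ σ' : V → ℕ) (v : V)
    (hbij : Set.BijOn σ Set.univ (Set.Iio n))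
    (hd : ∀ x : V, (σ v < σ x → σ' x = σ x - σ v - 1) ∧
      (σ x = σ v → σ' x = n - 1 - σ v) ∧
      (σ x < σ v → σ' x = σ x + n - σ v)) :
    Set.BijOn σ' Set.univ (Set.Iio n) := by
  have hlt : ∀ x : V, σ x < n := fun x => hbij.mapsTo (Set.mem_univ x)
  have hv : σ v < n := hlt v
  refine ⟨fun x _ => ?_, fun x _ y _ hxy => ?_, fun b hb => ?_⟩
  · have hx := hd x; have := hlt x; simp only [Set.mem_Iio]; omega
  · have hx := hd x; have hy := hd y
    have hxy' : σ x = σ y := by have := hlt x; have := hlt y; omega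
    exact hbij.injOn (Set.mem_univ x) (Set.mem_univ y) hxy'
  · simp only [Set.mem_Iio] at hb
    have han : (if b + σ v + 1 < n then b + σ v + 1 else
        if b + σ v + 1 = n then σ v else b + σ v - n) < n := by
      split
      · omega
      · split <;> omega
    obtain ⟨x, -, hxa⟩ := hbij.surjOn (Set.mem_Iio.mpr han)
    refine ⟨x, Set.mem_univ x, ?_⟩
    have hx := hd x
    clear han
    split at hxa
    · omega
    · split at hxa <;> omega

/-- If `(σ₁, σ₂)` is a permutation representation of `G` (bijections onto `{0,…,n-1}`,
distinct vertices adjacent iff the two induced orders disagree), and `σᵢ'` is obtained by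
the cyclic cut at `v` (`σᵢ'(x) = σᵢ(x) - σᵢ(v) - 1` if `σᵢ(x) > σᵢ(v)`,
`σᵢ'(v) = n - 1 - σᵢ(v)`, and `σᵢ'(x) = σᵢ(x) + n - σᵢ(v)` if `σᵢ(x) < σᵢ(v)`),
then `(σ₁', σ₂')` is a pair of bijections onto `{0,…,n-1}` representing
the Seidel complement `G*v`. -/
theorem seidelCompl_permutation_representation {V : Type u} [Fintype V] (G : SimpleGraph V)
    (n : ℕ) (hn : n = Fintype.card V)
    (σ₁ σ₂ : V → ℕ)
    (hbij₁ : Set.BijOn σ₁ Set.univ (Set.Iio n))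
    (hbij₂ : Set.BijOn σ₂ Set.univ (Set.Iio n))
    (hrep : ∀ u w : V, u ≠ w → (G.Adj u w ↔ ((σ₁ u < σ₁ w) ↔ (σ₂ w < σ₂ u))))
    (v : V) (σ₁' σ₂' : V → ℕ)
    (hdef₁ : ∀ x : V,
      (σ₁ v < σ₁ x → σ₁' x = σ₁ x - σ₁ v - 1) ∧
      (x = v → σ₁' x = n - 1 - σ₁ v) ∧
      (σ₁ x < σ₁ v → σ₁' x = σ₁ x + n - σ₁ v))
    (hdef₂ : ∀ x : V,
      (σ₂ v < σ₂ x → σ₂' x = σ₂ x - σ₂ v - 1) ∧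
      (x = v → σ₂' x = n - 1 - σ₂ v) ∧
      (σ₂ x < σ₂ v → σ₂' x = σ₂ x + n - σ₂ v)) :
    Set.BijOn σ₁' Set.univ (Set.Iio n) ∧ Set.BijOn σ₂' Set.univ (Set.Iio n) ∧
    ∀ u w : V, u ≠ w →
      ((seidelCompl G v).Adj u w ↔ ((σ₁' u < σ₁' w) ↔ (σ₂' w < σ₂' u))) := by
  have hlt₁ : ∀ x : V, σ₁ x < n := fun x => hbij₁.mapsTo (Set.mem_univ x)
  have hlt₂ : ∀ x : V, σ₂ x < n := fun x => hbij₂.mapsTo (Set.mem_univ x)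
  have hne₁ : ∀ x y : V, x ≠ y → σ₁ x ≠ σ₁ y := fun x y hxy h =>
    hxy (hbij₁.injOn (Set.mem_univ x) (Set.mem_univ y) h)
  have hne₂ : ∀ x y : V, x ≠ y → σ₂ x ≠ σ₂ y := fun x y hxy h =>
    hxy (hbij₂.injOn (Set.mem_univ x) (Set.mem_univ y) h)
  have hd₁ : ∀ x : V, (σ₁ v < σ₁ x → σ₁' x = σ₁ x - σ₁ v - 1) ∧
      (σ₁ x = σ₁ v → σ₁' x = n - 1 - σ₁ v) ∧
      (σ₁ x < σ₁ v → σ₁' x = σ₁ x + n - σ₁ v) := fun x =>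
    ⟨(hdef₁ x).1, fun h => (hdef₁ x).2.1 (hbij₁.injOn (Set.mem_univ x) (Set.mem_univ v) h),
      (hdef₁ x).2.2⟩
  have hd₂ : ∀ x : V, (σ₂ v < σ₂ x → σ₂' x = σ₂ x - σ₂ v - 1) ∧
      (σ₂ x = σ₂ v → σ₂' x = n - 1 - σ₂ v) ∧
      (σ₂ x < σ₂ v → σ₂' x = σ₂ x + n - σ₂ v) := fun x =>
    ⟨(hdef₂ x).1, fun h => (hdef₂ x).2.1 (hbij₂.injOn (Set.mem_univ x) (Set.mem_univ v) h),
      (hdef₂ x).2.2⟩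
  refine ⟨cutBij n σ₁ σ₁' v hbij₁ hd₁, cutBij n σ₂ σ₂' v hbij₂ hd₂, fun u w huw => ?_⟩
  have b1u := hlt₁ u; have b1w := hlt₁ w; have b1v := hlt₁ v
  have b2u := hlt₂ u; have b2w := hlt₂ w; have b2v := hlt₂ v
  have e1 := hne₁ u w huw; have e2 := hne₂ u w huw
  have du1 := hd₁ u; have dw1 := hd₁ w; have du2 := hd₂ u; have dw2 := hd₂ w
  by_cases huv : u = v
  · subst huv
    have hwv : w ≠ u := fun h => huw h.symm
    rw [seidelCompl_adj]
    simp only [Xor', Xor, SimpleGraph.irrefl, huw, hwv, ne_eq, not_true_eq_false,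
      not_false_eq_true, false_and, and_false, and_true, true_and, or_false, false_or,
      not_false_iff]
    rw [hrep u w huw]
    have e1v := hne₁ w u hwv; have e2v := hne₂ w u hwv
    omega
  · by_cases hwv : w = v
    · subst hwv
      rw [seidelCompl_adj]
      simp only [Xor', Xor, SimpleGraph.irrefl, huw, huv, ne_eq, not_true_eq_false,
        not_false_eq_true, false_and, and_false, and_true, true_and, or_false, false_or,
        not_false_iff]
      rw [hrep u w huw]
      have e1v := hne₁ u w huv; have e2v := hne₂ u w huv
      omega
    · rw [seidelCompl_adj, hrep u w huw, hrep v u (fun h => huv h.symm),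
        hrep v w (fun h => hwv h.symm)]
      have e1u := hne₁ u v huv; have e2u := hne₂ u v huv
      have e1w := hne₁ w v hwv; have e2w := hne₂ w v hwv
      simp only [Xor', Xor, ne_eq, huw, huv, hwv, not_false_eq_true, and_true, true_and]
      omega
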